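/- When cos(t) = -(3h²+1)/(4h²), the 4×4 Hermitian matrix G with rows (1, -1, 0, -e^{it}/2), (-1, 1, -h, 0), (0, -h, 1, -h), (-e^{-it}/2, 0, -h, 1) has eigenvalues 0, 2, 1 + √(8h²+1)/2, and 1 - √(8h²+1)/2. -/

import Mathlib

set_option maxHeartbeats 1000000


noncomputable def GramG (h t : ℝ) : Matrix (Fin 4) (Fin 4) ℂ :=
  !![1, -1, 0, -Complex.exp (t * Complex.I) / 2;
     -1, 1, -(h : ℂ), 0;
     0, -(h : ℂ), 1, -(h : ℂ);
     -Complex.exp (-t * Complex.I) / 2, 0, -(h : ℂ), 1]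

theorem eigenvalues_GramG_degenerate (h t : ℝ) (hh : 0 < h)
    (hle : (3 * h ^ 2 + 1) / (4 * h ^ 2) ≤ 1)
    (ht : Real.cos t = -((3 * h ^ 2 + 1) / (4 * h ^ 2))) :
    ∀ x : ℂ,
      (Matrix.charpoly (GramG h t)).eval x =
        x * (x - 2) *
          (x - (1 + ((Real.sqrt (8 * h ^ 2 + 1) / 2 : ℝ) : ℂ))) *
          (x - (1 - ((Real.sqrt (8 * h ^ 2 + 1) / 2 : ℝ) : ℂ))) := by
  intro x
  have hdet : (GramG h t).charpoly.eval x
      = (((GramG h t).charmatrix).map (Polynomial.eval x)).det := by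
    rw [Matrix.charpoly, ← Polynomial.coe_evalRingHom, RingHom.map_det, RingHom.mapMatrix_apply]
  set a : ℂ := Complex.exp (t * Complex.I) with ha
  set b : ℂ := Complex.exp (-t * Complex.I) with hb
  have hab : a * b = 1 := by
    rw [ha, hb, ← Complex.exp_add]
    ring_nf
    exact Complex.exp_zero
  have hsum : a + b = 2 * ((Real.cos t : ℝ) : ℂ) := by
    rw [Complex.ofReal_cos, Complex.cos, ha, hb]
    ring
  have hh' : (h : ℝ) ≠ 0 := ne_of_gt hh
  have hre : 4 * h ^ 2 * Real.cos t = -(3 * h ^ 2 + 1) := by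
    rw [ht]; field_simp
  have hcos : 4 * (h : ℂ) ^ 2 * ((Real.cos t : ℝ) : ℂ) = -(3 * (h : ℂ) ^ 2 + 1) := by
    exact_mod_cast congrArg (Complex.ofReal ·) hre
  have hsq : ((Real.sqrt (8 * h ^ 2 + 1) : ℝ) : ℂ) ^ 2 = 8 * (h : ℂ) ^ 2 + 1 := by
    rw [← Complex.ofReal_pow, Real.sq_sqrt (by positivity)]
    push_cast; ring
  have hbe : Complex.exp (-(↑t * Complex.I)) = b := by rw [hb]; congr 1; ring
  have hM : ((GramG h t).charmatrix.map (Polynomial.eval x))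
      = !![x - 1, 1, 0, a / 2;
           1, x - 1, (h : ℂ), 0;
           0, (h : ℂ), x - 1, (h : ℂ);
           b / 2, 0, (h : ℂ), x - 1] := by
    ext i j
    fin_cases i <;> fin_cases j <;>
      simp [GramG, Matrix.charmatrix_apply, Matrix.diagonal, hbe] <;> ring
  set N : Matrix (Fin 4) (Fin 4) ℂ :=
    !![x - 1, 1, 0, a / 2;
       1, x - 1, (h : ℂ), 0;
       0, (h : ℂ), x - 1, (h : ℂ);
       b / 2, 0, (h : ℂ), x - 1] with hN
  have m0 : N.submatrix Fin.succ ((0 : Fin 4).succAbove)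
      = !![x - 1, (h : ℂ), 0; (h : ℂ), x - 1, (h : ℂ); 0, (h : ℂ), x - 1] := by
    ext i j; fin_cases i <;> fin_cases j <;> rfl
  have m1 : N.submatrix Fin.succ ((1 : Fin 4).succAbove)
      = !![1, (h : ℂ), 0; 0, x - 1, (h : ℂ); b / 2, (h : ℂ), x - 1] := by
    ext i j; fin_cases i <;> fin_cases j <;> rfl
  have m2 : N.submatrix Fin.succ ((2 : Fin 4).succAbove)
      = !![1, x - 1, 0; 0, (h : ℂ), (h : ℂ); b / 2, 0, x - 1] := by
    ext i j; fin_cases i <;> fin_cases j <;> rfl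
  have m3 : N.submatrix Fin.succ ((3 : Fin 4).succAbove)
      = !![1, x - 1, (h : ℂ); 0, (h : ℂ), x - 1; b / 2, 0, (h : ℂ)] := by
    ext i j; fin_cases i <;> fin_cases j <;> rfl
  rw [hdet, hM, Matrix.det_succ_row_zero, Fin.sum_univ_four, m0, m1, m2, m3]
  simp only [Matrix.det_fin_three, hN]
  norm_num [show ((3 : Fin 4) : ℕ) = 3 from rfl]
  simp only [Matrix.cons_val_zero, Matrix.cons_val_one, Matrix.cons_val_two, Matrix.cons_val_three, Matrix.head_cons, Matrix.tail_cons, Matrix.cons_val_succ, Matrix.vecHead]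
  linear_combination ((h : ℂ) ^ 2 / 4 - (x - 1) ^ 2 / 4) * hab
    - ((h : ℂ) ^ 2 / 2) * hsum - (1 / 4 : ℂ) * hcos
    + ((x - 1) ^ 2 / 4 - 1 / 4) * hsq
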